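/- Let $E$, $F$ and $G$ be archimedean Riesz spaces and let $b : E \times F \to G$ be an order bounded disjointness preserving bilinear map. Then there exists a positive disjointness preserving bilinear map (an $\ell$-bimorphism) $|b| : E \times F \to G$ such that $|b(x,y)| = |b(|x|,|y|)| = |\,|b|(|x|,|y|)\,| = |b|(|x|,|y|)$ for all $x \in E$ and $y \in F$. -/

import Mathlib

set_option linter.unusedSectionVars false
set_option maxHeartbeats 1000000

namespace RieszAbsAux

section LatticeGroup
variable {A : Type*} [Lattice A] [AddCommGroup A] [CovariantClass A A (· + ·) (· ≤ ·)]

lemma inf_add_le' {a b c : A} (ha : 0 ≤ a) (hb : 0 ≤ b) (hc : 0 ≤ c) :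
    a ⊓ (b + c) ≤ a ⊓ b + a ⊓ c := by
  set d := a ⊓ (b + c) with hd
  have key : d - a ⊓ b ≤ a ⊓ c := by
    have hrw : d - a ⊓ b = (d - a) ⊔ (d - b) := by
      rw [sub_eq_add_neg, neg_inf, add_sup, ← sub_eq_add_neg, ← sub_eq_add_neg]
    rw [hrw]
    refine sup_le (le_inf ?_ ?_) (le_inf ?_ ?_)
    · exact (sub_nonpos.2 inf_le_left).trans ha
    · exact (sub_nonpos.2 inf_le_left).trans hc
    · exact (sub_le_self _ hb).trans inf_le_left
    · exact sub_le_iff_le_add'.2 inf_le_right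
  exact sub_le_iff_le_add'.1 key

lemma disj_add_eq_sup {a b : A} (h : a ⊓ b = 0) : a + b = a ⊔ b := by
  rw [← inf_add_sup, h, zero_add]

lemma disj_mono {a b a' b' : A} (h : a ⊓ b = 0) (ha' : 0 ≤ a') (hb' : 0 ≤ b')
    (haa : a' ≤ a) (hbb : b' ≤ b) : a' ⊓ b' = 0 :=
  le_antisymm (le_of_le_of_eq (inf_le_inf haa hbb) h) (le_inf ha' hb')

lemma disj_add {q b c : A} (hq : 0 ≤ q) (hb : 0 ≤ b) (hc : 0 ≤ c)
    (h1 : q ⊓ b = 0) (h2 : q ⊓ c = 0) : q ⊓ (b + c) = 0 :=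
  le_antisymm ((inf_add_le' hq hb hc).trans (by rw [h1, h2, add_zero]))
    (le_inf hq (add_nonneg hb hc))

lemma posPart_sub_inf (a b : A) : (a - b)⁺ = a - a ⊓ b := by
  have h : a - a ⊓ b = (a - a) ⊔ (a - b) := by
    rw [sub_eq_add_neg a (a ⊓ b), neg_inf, add_sup, ← sub_eq_add_neg, ← sub_eq_add_neg]
  rw [h, sub_self, posPart_def, sup_comm]

lemma decomp_posPart {P N x : A} (hd : P ⊓ N = 0) (hx : x = P - N) :
    x⁺ = P ∧ x⁻ = N := by
  constructor
  · rw [hx, posPart_sub_inf, hd, sub_zero]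
  · rw [← posPart_neg, show -x = N - P by rw [hx]; abel, posPart_sub_inf, inf_comm, hd, sub_zero]

lemma posPart_le_abs' (a : A) : a⁺ ≤ |a| := by
  rw [posPart_def]; exact sup_le (le_abs_self a) (abs_nonneg a)

lemma negPart_le_abs' (a : A) : a⁻ ≤ |a| := by
  rw [← posPart_neg, ← abs_neg]; exact posPart_le_abs' _

lemma parts_decomp_add {a c : A} (d2 : a⁺ ⊓ c⁻ = 0) (d3 : c⁺ ⊓ a⁻ = 0) :
    (a + c)⁺ = a⁺ + c⁺ ∧ (a + c)⁻ = a⁻ + c⁻ ∧ |a + c| = |a| + |c| := by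
  have d1 : a⁺ ⊓ a⁻ = 0 := posPart_inf_negPart_eq_zero a
  have d4 : c⁺ ⊓ c⁻ = 0 := posPart_inf_negPart_eq_zero c
  have e1 : a⁺ ⊓ (a⁻ + c⁻) = 0 :=
    disj_add (posPart_nonneg a) (negPart_nonneg a) (negPart_nonneg c) d1 d2
  have e2 : c⁺ ⊓ (a⁻ + c⁻) = 0 :=
    disj_add (posPart_nonneg c) (negPart_nonneg a) (negPart_nonneg c) d3 d4
  rw [inf_comm] at e1 e2
  have hPN : (a⁺ + c⁺) ⊓ (a⁻ + c⁻) = 0 := by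
    rw [inf_comm]
    exact disj_add (add_nonneg (negPart_nonneg a) (negPart_nonneg c))
      (posPart_nonneg a) (posPart_nonneg c) e1 e2
  have hx : a + c = (a⁺ + c⁺) - (a⁻ + c⁻) := by
    rw [show (a⁺ + c⁺) - (a⁻ + c⁻) = (a⁺ - a⁻) + (c⁺ - c⁻) by abel,
      posPart_sub_negPart, posPart_sub_negPart]
  obtain ⟨h1, h2⟩ := decomp_posPart hPN hx
  refine ⟨h1, h2, ?_⟩
  rw [← posPart_add_negPart (a + c), h1, h2,
    show a⁺ + c⁺ + (a⁻ + c⁻) = (a⁺ + a⁻) + (c⁺ + c⁻) by abel,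
    posPart_add_negPart, posPart_add_negPart]

lemma disj_abs_of {a c : A} (h : |a| ⊓ |c| = 0) :
    (a + c)⁺ = a⁺ + c⁺ ∧ (a + c)⁻ = a⁻ + c⁻ ∧ |a + c| = |a| + |c| := by
  have h' : |c| ⊓ |a| = 0 := by rw [inf_comm]; exact h
  exact parts_decomp_add
    (disj_mono h (posPart_nonneg a) (negPart_nonneg c) (posPart_le_abs' a) (negPart_le_abs' c))
    (disj_mono h' (posPart_nonneg c) (negPart_nonneg a) (posPart_le_abs' c) (negPart_le_abs' a))

lemma disj_abs_sub {a c : A} (h : |a| ⊓ |c| = 0) :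
    (a - c)⁺ = a⁺ + c⁻ ∧ (a - c)⁻ = a⁻ + c⁺ ∧ |a - c| = |a| + |c| := by
  have h2 : |a| ⊓ |(-c)| = 0 := by rw [abs_neg]; exact h
  obtain ⟨g1, g2, g3⟩ := disj_abs_of h2
  rw [← sub_eq_add_neg] at g1 g2 g3
  rw [posPart_neg] at g1
  rw [negPart_neg] at g2
  rw [abs_neg] at g3
  exact ⟨g1, g2, g3⟩

lemma q_le_posPart {q A' B : A} (hqA : q ≤ A') (hd : q ⊓ B = 0) : q ≤ (A' - B)⁺ := by
  have h1 : (q - B)⁺ = q := by rw [posPart_sub_inf, hd, sub_zero]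
  calc q = (q - B)⁺ := h1.symm
    _ ≤ (A' - B)⁺ := posPart_mono (sub_le_sub_right hqA B)

lemma negPart_lip (a b : A) : |a⁻ - b⁻| ≤ |a - b| := by
  rw [negPart_def, negPart_def]
  calc |(-a ⊔ 0) - (-b ⊔ 0)| ≤ |(-a) - (-b)| := abs_sup_sub_sup_le_abs _ _ _
    _ = |a - b| := by rw [neg_sub_neg, abs_sub_comm]

lemma inf_lip (q a b : A) : |q ⊓ a - q ⊓ b| ≤ |a - b| := by
  rw [inf_comm q a, inf_comm q b]; exact abs_inf_sub_inf_le_abs a b q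

lemma posPart_add_le' (a b : A) : (a + b)⁺ ≤ a⁺ + b⁺ := by
  rw [posPart_def (a + b)]
  exact sup_le (add_le_add (le_posPart a) (le_posPart b))
    (add_nonneg (posPart_nonneg a) (posPart_nonneg b))

lemma negPart_add_le' (a b : A) : (a + b)⁻ ≤ a⁻ + b⁻ := by
  rw [← posPart_neg, neg_add]
  exact (posPart_add_le' _ _).trans (by rw [posPart_neg, posPart_neg])

lemma sum_nonneg' {m : ℕ} {δ : ℕ → A} (h0 : ∀ k, k < m → 0 ≤ δ k) :
    0 ≤ ∑ k ∈ Finset.range m, δ k := by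
  induction m with
  | zero => simp
  | succ m ih =>
    rw [Finset.sum_range_succ]
    exact add_nonneg (ih fun k hk => h0 k (hk.trans (Nat.lt_succ_self m)))
      (h0 m (Nat.lt_succ_self m))

lemma disj_sum {q : A} {m : ℕ} {δ : ℕ → A} (hq : 0 ≤ q) (h0 : ∀ k, k < m → 0 ≤ δ k)
    (hd : ∀ k, k < m → q ⊓ δ k = 0) : q ⊓ (∑ k ∈ Finset.range m, δ k) = 0 := by
  induction m with
  | zero => simpa using inf_eq_right.mpr hq
  | succ m ih =>
    rw [Finset.sum_range_succ]
    exact disj_add hq (sum_nonneg' fun k hk => h0 k (hk.trans (Nat.lt_succ_self m)))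
      (h0 m (Nat.lt_succ_self m))
      (ih (fun k hk => h0 k (hk.trans (Nat.lt_succ_self m)))
        (fun k hk => hd k (hk.trans (Nat.lt_succ_self m))))
      (hd m (Nat.lt_succ_self m))

lemma sum_disj_le {m : ℕ} {δ : ℕ → A} {e : A} (he : 0 ≤ e)
    (h0 : ∀ k, k < m → 0 ≤ δ k) (hle : ∀ k, k < m → δ k ≤ e)
    (hd : ∀ j k, j < k → k < m → δ j ⊓ δ k = 0) :
    ∑ k ∈ Finset.range m, δ k ≤ e := by
  induction m with
  | zero => simpa using he
  | succ m ih =>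
    rw [Finset.sum_range_succ]
    have hSd : (δ m) ⊓ (∑ k ∈ Finset.range m, δ k) = 0 :=
      disj_sum (h0 m (Nat.lt_succ_self m))
        (fun k hk => h0 k (hk.trans (Nat.lt_succ_self m)))
        (fun k hk => by rw [inf_comm]; exact hd k m hk (Nat.lt_succ_self m))
    rw [inf_comm] at hSd
    rw [disj_add_eq_sup hSd]
    exact sup_le
      (ih (fun k hk => h0 k (hk.trans (Nat.lt_succ_self m)))
        (fun k hk => hle k (hk.trans (Nat.lt_succ_self m)))
        (fun j k hj hk => hd j k hj (hk.trans (Nat.lt_succ_self m))))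
      (hle m (Nat.lt_succ_self m))

end LatticeGroup

section ModuleHelpers
variable {A : Type*} [Lattice A] [AddCommGroup A] [CovariantClass A A (· + ·) (· ≤ ·)]
  [Module ℝ A] [PosSMulMono ℝ A]

lemma smul_sup' {c : ℝ} (hc : 0 ≤ c) (a b : A) : c • (a ⊔ b) = (c • a) ⊔ (c • b) := by
  rcases eq_or_lt_of_le hc with h | h
  · simp [← h]
  · apply le_antisymm
    · have h1 : a ≤ c⁻¹ • ((c • a) ⊔ (c • b)) := by
        have h3 := smul_le_smul_of_nonneg_left (le_sup_left : c • a ≤ c • a ⊔ c • b)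
          (inv_nonneg.2 hc)
        rwa [inv_smul_smul₀ h.ne' a] at h3
      have h2 : b ≤ c⁻¹ • ((c • a) ⊔ (c • b)) := by
        have h3 := smul_le_smul_of_nonneg_left (le_sup_right : c • b ≤ c • a ⊔ c • b)
          (inv_nonneg.2 hc)
        rwa [inv_smul_smul₀ h.ne' b] at h3
      have h3 := smul_le_smul_of_nonneg_left (sup_le h1 h2) hc
      rwa [smul_inv_smul₀ h.ne'] at h3
    · exact sup_le (smul_le_smul_of_nonneg_left le_sup_left hc)
        (smul_le_smul_of_nonneg_left le_sup_right hc)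

lemma smul_posPart' {c : ℝ} (hc : 0 ≤ c) (a : A) : (c • a)⁺ = c • a⁺ := by
  rw [posPart_def, posPart_def, smul_sup' hc, smul_zero]

lemma smul_negPart' {c : ℝ} (hc : 0 ≤ c) (a : A) : (c • a)⁻ = c • a⁻ := by
  rw [← posPart_neg, ← smul_neg, smul_posPart' hc, posPart_neg]

lemma smul_abs' {c : ℝ} (hc : 0 ≤ c) (a : A) : |c • a| = c • |a| := by
  rw [← posPart_add_negPart (c • a), smul_posPart' hc, smul_negPart' hc, ← smul_add,
    posPart_add_negPart]

lemma smul_le_smul_scalar {c d : ℝ} (hcd : c ≤ d) {a : A} (ha : 0 ≤ a) : c • a ≤ d • a := by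
  have h : 0 ≤ (d - c) • a := smul_nonneg (sub_nonneg.2 hcd) ha
  have h2 : c • a + (d - c) • a = d • a := by rw [← add_smul]; norm_num
  calc c • a ≤ c • a + (d - c) • a := le_add_of_nonneg_right h
    _ = d • a := h2

lemma le_zero_of_arch {p w : A} (hArch : ∀ x y : A, (∀ n : ℕ, n • x ≤ y) → x ≤ 0) (hw : 0 ≤ w)
    (h : ∀ n : ℕ, 1 ≤ n → p ≤ ((n : ℝ)⁻¹) • w) : p ≤ 0 := by
  apply hArch p w
  intro n
  cases n with
  | zero => simpa using hw
  | succ m =>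
    have hpos : (0 : ℝ) < ((m + 1 : ℕ) : ℝ) := by positivity
    have h1 := h (m + 1) (by omega)
    have h2 := smul_le_smul_of_nonneg_left h1 hpos.le
    rw [smul_inv_smul₀ hpos.ne'] at h2
    rw [← Nat.cast_smul_eq_nsmul ℝ]
    exact h2

end ModuleHelpers

section Key
variable {E G : Type*}
  [Lattice E] [AddCommGroup E] [Module ℝ E]
  [CovariantClass E E (· + ·) (· ≤ ·)] [PosSMulMono ℝ E]
  [Lattice G] [AddCommGroup G] [Module ℝ G]
  [CovariantClass G G (· + ·) (· ≤ ·)] [PosSMulMono ℝ G]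

/-- Core (comparable case): for an order bounded disjointness preserving `T` with archimedean
codomain, `(T x)⁺ ⊓ (T y)⁻ = 0` whenever `0 ≤ y ≤ x`. -/
lemma key_comp (hArch : ∀ x y : G, (∀ n : ℕ, n • x ≤ y) → x ≤ 0)
    (T : E →ₗ[ℝ] G)
    (hdp : ∀ z₁ z₂ : E, |z₁| ⊓ |z₂| = 0 → |T z₁| ⊓ |T z₂| = 0)
    {x y : E} (hy : 0 ≤ y) (hyx : y ≤ x)
    {w : G} (hw : ∀ z : E, 0 ≤ z → z ≤ x → |T z| ≤ w) :
    (T x)⁺ ⊓ (T y)⁻ = 0 := by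
  have hx : 0 ≤ x := hy.trans hyx
  have hw0 : 0 ≤ w := by
    have h := hw 0 le_rfl hx
    simpa using h
  set p := (T x)⁺ ⊓ (T y)⁻ with hpdef
  have hp0 : 0 ≤ p := le_inf (posPart_nonneg _) (negPart_nonneg _)
  have hpa : p ≤ (T x)⁺ := inf_le_left
  have hpb : p ≤ (T y)⁻ := inf_le_right
  have hdx : p ⊓ (T x)⁻ = 0 :=
    disj_mono (posPart_inf_negPart_eq_zero (T x)) hp0 (negPart_nonneg _) hpa le_rfl
  have hdy : p ⊓ (T y)⁺ = 0 := by
    have h := posPart_inf_negPart_eq_zero (T y)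
    rw [inf_comm] at h
    exact disj_mono h hp0 (posPart_nonneg _) hpb le_rfl
  suffices hsuff : ∀ n : ℕ, 1 ≤ n → p ≤ ((n : ℝ)⁻¹) • w by
    exact le_antisymm (le_zero_of_arch hArch hw0 hsuff) hp0
  intro n hn
  have hnR : (0 : ℝ) < (n : ℝ) := by exact_mod_cast hn
  -- the slicing family
  set z : ℕ → E := fun k => y - ((k : ℝ) / (n : ℝ)) • x with hzdef
  set C : ℕ → G := fun k => T ((z k)⁺) with hCdef
  set D : ℕ → G := fun k => T ((z k)⁻) with hDdef
  have hs0 : ∀ k : ℕ, (0 : ℝ) ≤ (k : ℝ) / (n : ℝ) := fun k => by positivity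
  have hs1 : ∀ k : ℕ, k ≤ n → (k : ℝ) / (n : ℝ) ≤ 1 := fun k hk => by
    rw [div_le_one hnR]; exact_mod_cast hk
  have hsmx : ∀ k : ℕ, 0 ≤ ((k : ℝ) / (n : ℝ)) • x := fun k => smul_nonneg (hs0 k) hx
  have hcy : ∀ k : ℕ, (z k)⁺ ≤ y := by
    intro k
    have h1 : z k ≤ y := sub_le_self _ (hsmx k)
    calc (z k)⁺ ≤ y⁺ := posPart_mono h1
      _ = y := posPart_eq_self.2 hy
  have hcx : ∀ k : ℕ, (z k)⁺ ≤ x := fun k => (hcy k).trans hyx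
  have hdivmono : ∀ j k : ℕ, j ≤ k → (j : ℝ) / (n : ℝ) ≤ (k : ℝ) / (n : ℝ) := by
    intro j k hjk
    rw [div_eq_mul_inv, div_eq_mul_inv]
    exact mul_le_mul_of_nonneg_right (by exact_mod_cast hjk) (by positivity)
  have hanti : ∀ j k : ℕ, j ≤ k → (z k)⁺ ≤ (z j)⁺ := by
    intro j k hjk
    exact posPart_mono (sub_le_sub_left (smul_le_smul_scalar (hdivmono j k hjk) hx) y)
  have hCw : ∀ k : ℕ, |C k| ≤ w := fun k => hw _ (posPart_nonneg _) (hcx k)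
  have hdisjCD : ∀ j k : ℕ, j ≤ k → |C k| ⊓ |D j| = 0 := by
    intro j k hjk
    apply hdp
    rw [abs_of_nonneg (posPart_nonneg _), abs_of_nonneg (negPart_nonneg _)]
    exact disj_mono (posPart_inf_negPart_eq_zero (z j)) (posPart_nonneg _) (negPart_nonneg _)
      (hanti j k hjk) le_rfl
  -- step 1 : p ≤ (C k)⁻ + (D k)⁺ for k ≤ n
  have F1 : ∀ k : ℕ, k ≤ n → p ≤ (C k)⁻ + (D k)⁺ := by
    intro k hk
    have hTz : T (z k) = C k - D k := by
      rw [hCdef, hDdef]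
      rw [← map_sub, posPart_sub_negPart]
    have hTz2 : T (z k) = T y - ((k : ℝ) / (n : ℝ)) • T x := by
      rw [hzdef]
      simp [map_sub, map_smul]
    have hE : ((k : ℝ) / (n : ℝ)) • T x - T y = D k - C k := by
      have h2 : C k - D k = T y - ((k : ℝ) / (n : ℝ)) • T x := by rw [← hTz, hTz2]
      rw [← neg_sub (C k) (D k), h2, neg_sub]
    have hdisj : |D k| ⊓ |C k| = 0 := by rw [inf_comm]; exact hdisjCD k k le_rfl
    obtain ⟨hpp, -, -⟩ := disj_abs_sub hdisj
    have hAB : (((k : ℝ) / (n : ℝ)) • (T x)⁺ + (T y)⁻) -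
        (((k : ℝ) / (n : ℝ)) • (T x)⁻ + (T y)⁺) = ((k : ℝ) / (n : ℝ)) • T x - T y := by
      calc (((k : ℝ) / (n : ℝ)) • (T x)⁺ + (T y)⁻) -
          (((k : ℝ) / (n : ℝ)) • (T x)⁻ + (T y)⁺)
          = ((k : ℝ) / (n : ℝ)) • ((T x)⁺ - (T x)⁻) - ((T y)⁺ - (T y)⁻) := by
            rw [smul_sub]; abel
        _ = ((k : ℝ) / (n : ℝ)) • T x - T y := by
            rw [posPart_sub_negPart, posPart_sub_negPart]
    have hqA : p ≤ ((k : ℝ) / (n : ℝ)) • (T x)⁺ + (T y)⁻ :=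
      hpb.trans (le_add_of_nonneg_left (smul_nonneg (hs0 k) (posPart_nonneg _)))
    have hqB : p ⊓ (((k : ℝ) / (n : ℝ)) • (T x)⁻ + (T y)⁺) = 0 := by
      apply disj_add hp0 (smul_nonneg (hs0 k) (negPart_nonneg _)) (posPart_nonneg _)
      · have hle : ((k : ℝ) / (n : ℝ)) • (T x)⁻ ≤ (T x)⁻ := by
          have h5 := smul_le_smul_scalar (hs1 k hk) (negPart_nonneg (T x))
          rwa [one_smul] at h5
        exact le_antisymm ((inf_le_inf le_rfl hle).trans hdx.le)
          (le_inf hp0 (smul_nonneg (hs0 k) (negPart_nonneg _)))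
      · exact hdy
    have hkey := q_le_posPart hqA hqB
    rw [hAB, hE, hpp] at hkey
    rwa [add_comm] at hkey
  -- the two families
  set Φ : ℕ → G := fun k => p ⊓ (C k)⁻ with hΦdef
  set Ψ : ℕ → G := fun k => p ⊓ (D k)⁺ with hΨdef
  have hΦ0 : ∀ k, 0 ≤ Φ k := fun k => le_inf hp0 (negPart_nonneg _)
  have hΨ0 : ∀ k, 0 ≤ Ψ k := fun k => le_inf hp0 (posPart_nonneg _)
  have hΦp : ∀ k, Φ k ≤ p := fun k => inf_le_left
  have hΨp : ∀ k, Ψ k ≤ p := fun k => inf_le_left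
  have hΦΨdisj : ∀ j k : ℕ, j ≤ k → Φ k ⊓ Ψ j = 0 := by
    intro j k hjk
    have h1 : (C k)⁻ ⊓ (D j)⁺ = 0 :=
      disj_mono (hdisjCD j k hjk) (negPart_nonneg _) (posPart_nonneg _)
        (negPart_le_abs' _) (posPart_le_abs' _)
    exact disj_mono h1 (hΦ0 k) (hΨ0 j) inf_le_right inf_le_right
  have F6 : ∀ k : ℕ, k ≤ n → Φ k + Ψ k = p := by
    intro k hk
    apply le_antisymm
    · rw [disj_add_eq_sup (hΦΨdisj k k le_rfl)]
      exact sup_le (hΦp k) (hΨp k)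
    · have h1 : p ⊓ ((C k)⁻ + (D k)⁺) = p := inf_eq_left.2 (F1 k hk)
      have h2 := inf_add_le' hp0 (negPart_nonneg (C k)) (posPart_nonneg (D k))
      rw [h1] at h2
      exact h2
  -- increments
  set δ : ℕ → G := fun k => Φ k - Φ (k + 1) with hδdef
  have hδψ : ∀ k : ℕ, k + 1 ≤ n → δ k = Ψ (k + 1) - Ψ k := by
    intro k hk
    have hsum : Φ k + Ψ k = Φ (k + 1) + Ψ (k + 1) :=
      (F6 k (le_of_lt hk)).trans (F6 (k + 1) hk).symm
    show Φ k - Φ (k + 1) = Ψ (k + 1) - Ψ k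
    rw [sub_eq_sub_iff_add_eq_add, hsum, add_comm]
  have F7 : ∀ k : ℕ, k + 1 ≤ n → 0 ≤ δ k := by
    intro k hk
    have h1 : -(δ k) ≤ Φ (k + 1) := by
      show -(Φ k - Φ (k + 1)) ≤ Φ (k + 1)
      rw [neg_sub]
      exact sub_le_self _ (hΦ0 k)
    have h2 : -(δ k) ≤ Ψ k := by
      rw [hδψ k hk, neg_sub]
      exact sub_le_self _ (hΨ0 (k + 1))
    have h3 : -(δ k) ≤ 0 := by
      calc -(δ k) ≤ Φ (k + 1) ⊓ Ψ k := le_inf h1 h2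
        _ = 0 := hΦΨdisj k (k + 1) (Nat.le_succ k)
    exact neg_nonpos.1 h3
  -- Lipschitz bound on increments
  have F8 : ∀ k : ℕ, k + 1 ≤ n → δ k ≤ ((n : ℝ)⁻¹) • w := by
    intro k hk
    have hzz : z k = z (k + 1) + ((n : ℝ)⁻¹) • x := by
      show y - ((k : ℝ) / (n : ℝ)) • x =
        (y - (((k + 1 : ℕ) : ℝ) / (n : ℝ)) • x) + ((n : ℝ)⁻¹) • x
      have harith : ((k : ℝ) / (n : ℝ)) • x =
          (((k + 1 : ℕ) : ℝ) / (n : ℝ)) • x - ((n : ℝ)⁻¹) • x := by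
        rw [← sub_smul]
        congr 1
        push_cast
        field_simp
        ring
      rw [harith]
      abel
    have hslice : (z k)⁺ - (z (k + 1))⁺ ≤ ((n : ℝ)⁻¹) • x := by
      have h1 : (z k)⁺ ≤ (z (k + 1))⁺ + ((n : ℝ)⁻¹) • x := by
        calc (z k)⁺ = (z (k + 1) + ((n : ℝ)⁻¹) • x)⁺ := by rw [← hzz]
          _ ≤ (z (k + 1))⁺ + (((n : ℝ)⁻¹) • x)⁺ := posPart_add_le' _ _
          _ = (z (k + 1))⁺ + ((n : ℝ)⁻¹) • x := by
              rw [posPart_eq_self.2 (smul_nonneg (by positivity) hx)]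
      exact sub_le_iff_le_add.2 (h1.trans_eq (add_comm _ _))
    have hslice0 : 0 ≤ (z k)⁺ - (z (k + 1))⁺ :=
      sub_nonneg.2 (hanti k (k + 1) (Nat.le_succ k))
    have hTf : |T ((z k)⁺ - (z (k + 1))⁺)| ≤ ((n : ℝ)⁻¹) • w := by
      have hnf : (n : ℝ) • ((z k)⁺ - (z (k + 1))⁺) ≤ x := by
        have h1 := smul_le_smul_of_nonneg_left hslice hnR.le
        rwa [smul_inv_smul₀ hnR.ne'] at h1
      have hnf0 : 0 ≤ (n : ℝ) • ((z k)⁺ - (z (k + 1))⁺) := smul_nonneg hnR.le hslice0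
      have h2 : |T ((n : ℝ) • ((z k)⁺ - (z (k + 1))⁺))| ≤ w := hw _ hnf0 hnf
      have h3 : T ((z k)⁺ - (z (k + 1))⁺) =
          ((n : ℝ)⁻¹) • T ((n : ℝ) • ((z k)⁺ - (z (k + 1))⁺)) := by
        rw [map_smul, inv_smul_smul₀ hnR.ne']
      rw [h3, smul_abs' (by positivity)]
      exact smul_le_smul_of_nonneg_left h2 (by positivity)
    have hCC : |C k - C (k + 1)| ≤ ((n : ℝ)⁻¹) • w := by
      have h4 : C k - C (k + 1) = T ((z k)⁺ - (z (k + 1))⁺) := by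
        show T (z k)⁺ - T (z (k + 1))⁺ = _
        rw [map_sub]
      rw [h4]
      exact hTf
    have hlip : |δ k| ≤ |C k - C (k + 1)| := by
      have h5 : |δ k| ≤ |(C k)⁻ - (C (k + 1))⁻| := by
        show |p ⊓ (C k)⁻ - p ⊓ (C (k + 1))⁻| ≤ _
        exact inf_lip p _ _
      exact h5.trans (negPart_lip _ _)
    exact (le_abs_self _).trans (hlip.trans hCC)
  -- monotonicity of Φ
  have hΦmono : ∀ j k : ℕ, j ≤ k → k ≤ n → Φ k ≤ Φ j := by
    intro j k hjk hkn
    induction k with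
    | zero =>
      have h0 : j = 0 := Nat.le_zero.1 hjk
      rw [h0]
    | succ m ih =>
      rcases Nat.lt_or_ge j (m + 1) with h | h
      · have hj : j ≤ m := Nat.lt_succ_iff.1 h
        have h1 : Φ (m + 1) ≤ Φ m := sub_nonneg.1 (F7 m hkn)
        exact h1.trans (ih hj (le_of_lt hkn))
      · have h0 : j = m + 1 := le_antisymm hjk h
        rw [h0]
  -- pairwise disjointness of increments
  have F9 : ∀ j k : ℕ, j < k → k + 1 ≤ n → δ j ⊓ δ k = 0 := by
    intro j k hjk hk
    have hδj : δ j ≤ Ψ (j + 1) := by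
      rw [hδψ j (by omega)]
      exact sub_le_self _ (hΨ0 j)
    have hδk : δ k ≤ Φ (j + 1) := by
      have h1 : δ k ≤ Φ k := sub_le_self _ (hΦ0 (k + 1))
      exact h1.trans (hΦmono (j + 1) k hjk (by omega))
    have hd : Ψ (j + 1) ⊓ Φ (j + 1) = 0 := by
      rw [inf_comm]; exact hΦΨdisj (j + 1) (j + 1) le_rfl
    exact disj_mono hd (F7 j (by omega)) (F7 k hk) hδj hδk
  -- telescoping
  have F10 : ∑ k ∈ Finset.range n, δ k = p := by
    have htel : ∑ k ∈ Finset.range n, δ k = Φ 0 - Φ n :=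
      Finset.sum_range_sub' Φ n
    have hΦzero : Φ 0 = p := by
      have hc0 : (z 0)⁺ = y := by
        show (y - (((0 : ℕ) : ℝ) / (n : ℝ)) • x)⁺ = y
        simp only [Nat.cast_zero, zero_div, zero_smul, sub_zero]
        exact posPart_eq_self.2 hy
      show p ⊓ (C 0)⁻ = p
      show p ⊓ (T (z 0)⁺)⁻ = p
      rw [hc0]
      exact inf_eq_left.2 hpb
    have hΦn : Φ n = 0 := by
      have hcn : (z n)⁺ = 0 := by
        show (y - (((n : ℕ) : ℝ) / (n : ℝ)) • x)⁺ = 0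
        rw [div_self hnR.ne', one_smul]
        exact posPart_eq_zero.2 (sub_nonpos.2 hyx)
      show p ⊓ (T (z n)⁺)⁻ = 0
      rw [hcn, map_zero]
      have hz0 : ((0 : G))⁻ = 0 := negPart_eq_zero.2 le_rfl
      rw [hz0]
      exact inf_eq_right.2 hp0
    rw [htel, hΦzero, hΦn, sub_zero]
  rw [← F10]
  exact sum_disj_le (smul_nonneg (by positivity) hw0)
    (fun k hk => F7 k hk) (fun k hk => F8 k hk)
    (fun j k hj hk => F9 j k hj hk)

/-- General case: sign consistency for all pairs of positive elements. -/
lemma key_general (hArch : ∀ x y : G, (∀ n : ℕ, n • x ≤ y) → x ≤ 0)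
    (T : E →ₗ[ℝ] G)
    (hdp : ∀ z₁ z₂ : E, |z₁| ⊓ |z₂| = 0 → |T z₁| ⊓ |T z₂| = 0)
    (hob : ∀ u : E, 0 ≤ u → ∃ g : G, ∀ z : E, 0 ≤ z → z ≤ u → |T z| ≤ g)
    {x y : E} (hx : 0 ≤ x) (hy : 0 ≤ y) :
    (T x)⁺ ⊓ (T y)⁻ = 0 := by
  obtain ⟨wy, hwy⟩ := hob y hy
  have hwy0 : 0 ≤ wy := by have h := hwy 0 le_rfl hy; simpa using h
  set p := (T x)⁺ ⊓ (T y)⁻ with hpdef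
  have hp0 : 0 ≤ p := le_inf (posPart_nonneg _) (negPart_nonneg _)
  suffices hs : ∀ n : ℕ, 1 ≤ n → p ≤ ((n : ℝ)⁻¹) • wy by
    exact le_antisymm (le_zero_of_arch hArch hwy0 hs) hp0
  intro n hn
  have hnR : (0 : ℝ) < (n : ℝ) := by exact_mod_cast hn
  have hn1 : (1 : ℝ) ≤ (n : ℝ) := by exact_mod_cast hn
  set X := (n : ℝ) • x with hXdef
  have hX0 : 0 ≤ X := smul_nonneg hnR.le hx
  obtain ⟨wX, hwX⟩ := hob X hX0
  set Y := y ⊓ X with hYdef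
  set Y' := (y - X)⁺ with hY'def
  have hY0 : 0 ≤ Y := le_inf hy hX0
  have hYX : Y ≤ X := inf_le_right
  have hYsum : y = Y + Y' := by
    rw [hY'def, posPart_sub_inf, hYdef]; abel
  have hcomp : (T X)⁺ ⊓ (T Y)⁻ = 0 := key_comp hArch T hdp hY0 hYX hwX
  have hTX : (T X)⁺ = (n : ℝ) • (T x)⁺ := by rw [hXdef, map_smul, smul_posPart' hnR.le]
  have hTxle : (T x)⁺ ≤ (T X)⁺ := by
    rw [hTX]
    have h := smul_le_smul_scalar hn1 (posPart_nonneg (T x))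
    rwa [one_smul] at h
  have h1 : p ⊓ (T Y)⁻ = 0 :=
    le_antisymm ((inf_le_inf (inf_le_left.trans hTxle) le_rfl).trans hcomp.le)
      (le_inf hp0 (negPart_nonneg _))
  have hinv1 : (n : ℝ)⁻¹ ≤ 1 := inv_le_one_of_one_le₀ hn1
  have h2 : p ⊓ (T Y')⁻ ≤ ((n : ℝ)⁻¹) • wy := by
    have hXid : X = X ⊓ y + (X - y)⁺ := by rw [posPart_sub_inf]; abel
    have hTXsum : T X = T (X ⊓ y) + T ((X - y)⁺) := by
      conv_lhs => rw [hXid]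
      rw [map_add]
    have hA : (T X)⁺ ≤ (T (X ⊓ y))⁺ + (T ((X - y)⁺))⁺ := by
      rw [hTXsum]; exact posPart_add_le' _ _
    have hA1 : (T (X ⊓ y))⁺ ≤ wy :=
      (posPart_le_abs' _).trans (hwy _ (le_inf hX0 hy) inf_le_right)
    have hA2 : (T ((X - y)⁺))⁺ ⊓ (T Y')⁻ = 0 := by
      have hdd : |T ((X - y)⁺)| ⊓ |T Y'| = 0 := by
        apply hdp
        rw [abs_of_nonneg (posPart_nonneg _), abs_of_nonneg (by rw [hY'def]; exact posPart_nonneg _)]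
        have hYn : Y' = (X - y)⁻ := by rw [hY'def, ← posPart_neg, neg_sub]
        rw [hYn]
        exact posPart_inf_negPart_eq_zero (X - y)
      exact disj_mono hdd (posPart_nonneg _) (negPart_nonneg _)
        (posPart_le_abs' _) (negPart_le_abs' _)
    have hp_le : p ≤ ((n : ℝ)⁻¹) • ((T (X ⊓ y))⁺ + (T ((X - y)⁺))⁺) := by
      have e1 : (T x)⁺ = ((n : ℝ)⁻¹) • (T X)⁺ := by rw [hTX, inv_smul_smul₀ hnR.ne']
      calc p ≤ (T x)⁺ := inf_le_left
        _ = ((n : ℝ)⁻¹) • (T X)⁺ := e1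
        _ ≤ _ := smul_le_smul_of_nonneg_left hA (by positivity)
    have hsm : ((n : ℝ)⁻¹) • (T ((X - y)⁺))⁺ ≤ (T ((X - y)⁺))⁺ := by
      have h := smul_le_smul_scalar hinv1 (posPart_nonneg (T ((X - y)⁺)))
      rwa [one_smul] at h
    calc p ⊓ (T Y')⁻
        ≤ (((n : ℝ)⁻¹) • ((T (X ⊓ y))⁺ + (T ((X - y)⁺))⁺)) ⊓ (T Y')⁻ :=
          inf_le_inf hp_le le_rfl
      _ = (T Y')⁻ ⊓ (((n : ℝ)⁻¹) • (T (X ⊓ y))⁺ + ((n : ℝ)⁻¹) • (T ((X - y)⁺))⁺) := by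
          rw [smul_add, inf_comm]
      _ ≤ (T Y')⁻ ⊓ (((n : ℝ)⁻¹) • (T (X ⊓ y))⁺) + (T Y')⁻ ⊓ (((n : ℝ)⁻¹) • (T ((X - y)⁺))⁺) :=
          inf_add_le' (negPart_nonneg _) (smul_nonneg (by positivity) (posPart_nonneg _))
            (smul_nonneg (by positivity) (posPart_nonneg _))
      _ ≤ ((n : ℝ)⁻¹) • wy + 0 := by
          apply add_le_add
          · exact inf_le_right.trans (smul_le_smul_of_nonneg_left hA1 (by positivity))
          · calc (T Y')⁻ ⊓ (((n : ℝ)⁻¹) • (T ((X - y)⁺))⁺)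
                ≤ (T ((X - y)⁺))⁺ ⊓ (T Y')⁻ := by
                  rw [inf_comm]
                  exact inf_le_inf hsm le_rfl
              _ = 0 := hA2
      _ = ((n : ℝ)⁻¹) • wy := add_zero _
  have h3 : p ≤ p ⊓ (T Y)⁻ + p ⊓ (T Y')⁻ := by
    have hTy : T y = T Y + T Y' := by
      conv_lhs => rw [hYsum]
      rw [map_add]
    have h4 : (T y)⁻ ≤ (T Y)⁻ + (T Y')⁻ := by rw [hTy]; exact negPart_add_le' _ _
    have h5 : p ≤ (T Y)⁻ + (T Y')⁻ := inf_le_right.trans h4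
    have h6 : p ⊓ ((T Y)⁻ + (T Y')⁻) = p := inf_eq_left.2 h5
    have h7 := inf_add_le' hp0 (negPart_nonneg (T Y)) (negPart_nonneg (T Y'))
    rw [h6] at h7
    exact h7
  calc p ≤ p ⊓ (T Y)⁻ + p ⊓ (T Y')⁻ := h3
    _ ≤ 0 + ((n : ℝ)⁻¹) • wy := add_le_add h1.le h2
    _ = ((n : ℝ)⁻¹) • wy := zero_add _

/-- Additivity of `u ↦ |T u|` on the positive cone. -/
lemma abs_map_add (hArch : ∀ x y : G, (∀ n : ℕ, n • x ≤ y) → x ≤ 0)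
    (T : E →ₗ[ℝ] G)
    (hdp : ∀ z₁ z₂ : E, |z₁| ⊓ |z₂| = 0 → |T z₁| ⊓ |T z₂| = 0)
    (hob : ∀ u : E, 0 ≤ u → ∃ g : G, ∀ z : E, 0 ≤ z → z ≤ u → |T z| ≤ g)
    {u₁ u₂ : E} (h1 : 0 ≤ u₁) (h2 : 0 ≤ u₂) :
    |T (u₁ + u₂)| = |T u₁| + |T u₂| := by
  have k1 : (T u₁)⁺ ⊓ (T u₂)⁻ = 0 := key_general hArch T hdp hob h1 h2
  have k2 : (T u₂)⁺ ⊓ (T u₁)⁻ = 0 := key_general hArch T hdp hob h2 h1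
  have h := (parts_decomp_add k1 k2).2.2
  rw [map_add]
  exact h

end Key

end RieszAbsAux

/-- Let `E`, `F`, `G` be archimedean Riesz spaces and let
`b : E × F → G` be an order bounded disjointness preserving bilinear map.
Then there exists an ℓ-bimorphism (positive disjointness preserving bilinear map)
`|b| = B` such that `|b(x,y)| = |b(|x|,|y|)| = |B(|x|,|y|)| = B(|x|,|y|)`. -/
theorem riesz_abs_of_orderBounded_disjointnessPreserving_bilinear
    {E F G : Type*}
    [Lattice E] [AddCommGroup E] [Module ℝ E]
    [CovariantClass E E (· + ·) (· ≤ ·)] [PosSMulMono ℝ E]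
    [Lattice F] [AddCommGroup F] [Module ℝ F]
    [CovariantClass F F (· + ·) (· ≤ ·)] [PosSMulMono ℝ F]
    [Lattice G] [AddCommGroup G] [Module ℝ G]
    [CovariantClass G G (· + ·) (· ≤ ·)] [PosSMulMono ℝ G]
    -- archimedean hypotheses
    (hE : ∀ x y : E, (∀ n : ℕ, n • x ≤ y) → x ≤ 0)
    (hF : ∀ x y : F, (∀ n : ℕ, n • x ≤ y) → x ≤ 0)
    (hG : ∀ x y : G, (∀ n : ℕ, n • x ≤ y) → x ≤ 0)
    -- the bilinear map `b`
    (b : E →ₗ[ℝ] F →ₗ[ℝ] G)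
    -- `b` is order bounded
    (hb_ob : ∀ x : E, 0 ≤ x → ∀ y : F, 0 ≤ y →
      ∃ g : G, ∀ (u : E) (v : F), 0 ≤ u → u ≤ x → 0 ≤ v → v ≤ y →
        -g ≤ b u v ∧ b u v ≤ g)
    -- `b` is disjointness preserving in each variable
    (hb_dp₁ : ∀ x y : E, |x| ⊓ |y| = 0 → ∀ z : F, |b x z| ⊓ |b y z| = 0)
    (hb_dp₂ : ∀ u v : F, |u| ⊓ |v| = 0 → ∀ t : E, |b t u| ⊓ |b t v| = 0) :
    ∃ B : E →ₗ[ℝ] F →ₗ[ℝ] G,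
      -- `B` is positive
      (∀ x : E, 0 ≤ x → ∀ y : F, 0 ≤ y → 0 ≤ B x y) ∧
      -- `B` is disjointness preserving in each variable
      (∀ x y : E, |x| ⊓ |y| = 0 → ∀ z : F, |B x z| ⊓ |B y z| = 0) ∧
      (∀ u v : F, |u| ⊓ |v| = 0 → ∀ t : E, |B t u| ⊓ |B t v| = 0) ∧
      -- the chain of equalities
      (∀ (x : E) (y : F),
        |b x y| = |b (|x|) (|y|)| ∧ |b (|x|) (|y|)| = |B (|x|) (|y|)| ∧
          |B (|x|) (|y|)| = B (|x|) (|y|)) := by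
  classical
  -- order boundedness of the partial maps
  have hob1 : ∀ v : F, 0 ≤ v → ∀ u : E, 0 ≤ u →
      ∃ g : G, ∀ z : E, 0 ≤ z → z ≤ u → |b z v| ≤ g := by
    intro v hv u hu
    obtain ⟨g, hg⟩ := hb_ob u hu v hv
    refine ⟨g, fun z hz hzu => ?_⟩
    obtain ⟨ha, hb'⟩ := hg z v hz hzu hv le_rfl
    exact abs_le'.2 ⟨hb', neg_le.mpr ha⟩
  have hob2 : ∀ u : E, 0 ≤ u → ∀ v : F, 0 ≤ v →
      ∃ g : G, ∀ z : F, 0 ≤ z → z ≤ v → |b u z| ≤ g := by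
    intro u hu v hv
    obtain ⟨g, hg⟩ := hb_ob u hu v hv
    refine ⟨g, fun z hz hzv => ?_⟩
    obtain ⟨ha, hb'⟩ := hg u z hu le_rfl hz hzv
    exact abs_le'.2 ⟨hb', neg_le.mpr ha⟩
  -- cone additivity in each variable
  have coneAdd1 : ∀ v : F, 0 ≤ v → ∀ u₁ u₂ : E, 0 ≤ u₁ → 0 ≤ u₂ →
      |b (u₁ + u₂) v| = |b u₁ v| + |b u₂ v| := by
    intro v hv u₁ u₂ h1 h2
    have h := RieszAbsAux.abs_map_add hG (b.flip v)
      (fun z₁ z₂ hz => by simpa only [LinearMap.flip_apply] using hb_dp₁ z₁ z₂ hz v)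
      (fun u hu => by
        obtain ⟨g, hg⟩ := hob1 v hv u hu
        exact ⟨g, fun z hz hzu => by
          simpa only [LinearMap.flip_apply] using hg z hz hzu⟩)
      h1 h2
    simpa only [LinearMap.flip_apply] using h
  have coneAdd2 : ∀ u : E, 0 ≤ u → ∀ v₁ v₂ : F, 0 ≤ v₁ → 0 ≤ v₂ →
      |b u (v₁ + v₂)| = |b u v₁| + |b u v₂| := by
    intro u hu v₁ v₂ h1 h2
    exact RieszAbsAux.abs_map_add hG (b u)
      (fun z₁ z₂ hz => hb_dp₂ z₁ z₂ hz u)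
      (fun v hv => hob2 u hu v hv)
      h1 h2
  -- scalar homogeneity of the absolute values
  have NS1 : ∀ c : ℝ, 0 ≤ c → ∀ (u : E) (v : F), |b (c • u) v| = c • |b u v| := by
    intro c hc u v
    rw [map_smul, LinearMap.smul_apply, RieszAbsAux.smul_abs' hc]
  have NS2 : ∀ c : ℝ, 0 ≤ c → ∀ (u : E) (v : F), |b u (c • v)| = c • |b u v| := by
    intro c hc u v
    rw [map_smul (b u), RieszAbsAux.smul_abs' hc]
  -- disjointness of the positive/negative parts
  have hdxE : ∀ x : E, |(x⁺ : E)| ⊓ |(x⁻ : E)| = 0 := by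
    intro x
    rw [abs_of_nonneg (posPart_nonneg x), abs_of_nonneg (negPart_nonneg x)]
    exact posPart_inf_negPart_eq_zero x
  have hdyF : ∀ y : F, |(y⁺ : F)| ⊓ |(y⁻ : F)| = 0 := by
    intro y
    rw [abs_of_nonneg (posPart_nonneg y), abs_of_nonneg (negPart_nonneg y)]
    exact posPart_inf_negPart_eq_zero y
  -- splitting |b · ·| along the parts
  have step1 : ∀ (x : E) (v : F), |b x v| = |b x⁺ v| + |b x⁻ v| := by
    intro x v
    have hbb : b x v = b x⁺ v - b x⁻ v := by
      have h : b x = b x⁺ - b x⁻ := by rw [← map_sub, posPart_sub_negPart]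
      rw [h, LinearMap.sub_apply]
    rw [hbb]
    exact (RieszAbsAux.disj_abs_sub (hb_dp₁ x⁺ x⁻ (hdxE x) v)).2.2
  have step2 : ∀ (u : E) (y : F), |b u y| = |b u y⁺| + |b u y⁻| := by
    intro u y
    have hbb : b u y = b u y⁺ - b u y⁻ := by rw [← map_sub (b u), posPart_sub_negPart]
    rw [hbb]
    exact (RieszAbsAux.disj_abs_sub (hb_dp₂ y⁺ y⁻ (hdyF y) u)).2.2
  have step1' : ∀ (x : E) (v : F), |b (|x|) v| = |b x⁺ v| + |b x⁻ v| := by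
    intro x v
    have hbb : b (|x|) v = b x⁺ v + b x⁻ v := by
      have h : b (|x|) = b x⁺ + b x⁻ := by rw [← map_add, posPart_add_negPart]
      rw [h, LinearMap.add_apply]
    rw [hbb]
    exact (RieszAbsAux.disj_abs_of (hb_dp₁ x⁺ x⁻ (hdxE x) v)).2.2
  have step2' : ∀ (u : E) (y : F), |b u (|y|)| = |b u y⁺| + |b u y⁻| := by
    intro u y
    have hbb : b u (|y|) = b u y⁺ + b u y⁻ := by rw [← map_add (b u), posPart_add_negPart]
    rw [hbb]
    exact (RieszAbsAux.disj_abs_of (hb_dp₂ y⁺ y⁻ (hdyF y) u)).2.2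
  -- the four-term sums
  have SUM4 : ∀ (x : E) (y : F),
      |b (|x|) (|y|)| = |b x⁺ y⁺| + |b x⁺ y⁻| + (|b x⁻ y⁺| + |b x⁻ y⁻|) := by
    intro x y
    rw [step1' x (|y|), step2' x⁺ y, step2' x⁻ y]
  have CHAIN1 : ∀ (x : E) (y : F), |b x y| = |b (|x|) (|y|)| := by
    intro x y
    rw [SUM4 x y, step1 x y, step2 x⁺ y, step2 x⁻ y]
  -- the candidate bilinear modulus
  set β : E → F → G := fun x y =>
    |b x⁺ y⁺| - |b x⁺ y⁻| - |b x⁻ y⁺| + |b x⁻ y⁻| with hβ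
  -- additivity in the first variable (extension argument)
  have ext1 : ∀ v : F, 0 ≤ v → ∀ x₁ x₂ : E,
      |b (x₁ + x₂)⁺ v| - |b (x₁ + x₂)⁻ v| =
        (|b x₁⁺ v| - |b x₁⁻ v|) + (|b x₂⁺ v| - |b x₂⁻ v|) := by
    intro v hv x₁ x₂
    have hid : (x₁ + x₂)⁺ + (x₁⁻ + x₂⁻) = (x₁ + x₂)⁻ + (x₁⁺ + x₂⁺) := by
      have h0 : (x₁ + x₂)⁺ + (x₁⁻ + x₂⁻) - ((x₁ + x₂)⁻ + (x₁⁺ + x₂⁺)) =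
          ((x₁ + x₂)⁺ - (x₁ + x₂)⁻) - ((x₁⁺ - x₁⁻) + (x₂⁺ - x₂⁻)) := by abel
      rw [posPart_sub_negPart, posPart_sub_negPart, posPart_sub_negPart] at h0
      have h1 : (x₁ + x₂)⁺ + (x₁⁻ + x₂⁻) - ((x₁ + x₂)⁻ + (x₁⁺ + x₂⁺)) = 0 := by
        rw [h0]; abel
      exact sub_eq_zero.1 h1
    have hL : |b ((x₁ + x₂)⁺ + (x₁⁻ + x₂⁻)) v| =
        |b (x₁ + x₂)⁺ v| + (|b x₁⁻ v| + |b x₂⁻ v|) := by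
      rw [coneAdd1 v hv _ _ (posPart_nonneg _)
        (add_nonneg (negPart_nonneg x₁) (negPart_nonneg x₂)),
        coneAdd1 v hv _ _ (negPart_nonneg x₁) (negPart_nonneg x₂)]
    have hR : |b ((x₁ + x₂)⁻ + (x₁⁺ + x₂⁺)) v| =
        |b (x₁ + x₂)⁻ v| + (|b x₁⁺ v| + |b x₂⁺ v|) := by
      rw [coneAdd1 v hv _ _ (negPart_nonneg _)
        (add_nonneg (posPart_nonneg x₁) (posPart_nonneg x₂)),
        coneAdd1 v hv _ _ (posPart_nonneg x₁) (posPart_nonneg x₂)]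
    have heq : |b (x₁ + x₂)⁺ v| + (|b x₁⁻ v| + |b x₂⁻ v|) =
        |b (x₁ + x₂)⁻ v| + (|b x₁⁺ v| + |b x₂⁺ v|) := by
      rw [← hL, ← hR, hid]
    have h2 : |b (x₁ + x₂)⁺ v| - |b (x₁ + x₂)⁻ v| =
        (|b x₁⁺ v| + |b x₂⁺ v|) - (|b x₁⁻ v| + |b x₂⁻ v|) := by
      rw [sub_eq_sub_iff_add_eq_add, heq, add_comm]
    rw [h2]; abel
  have ext2 : ∀ u : E, 0 ≤ u → ∀ y₁ y₂ : F,
      |b u (y₁ + y₂)⁺| - |b u (y₁ + y₂)⁻| =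
        (|b u y₁⁺| - |b u y₁⁻|) + (|b u y₂⁺| - |b u y₂⁻|) := by
    intro u hu y₁ y₂
    have hid : (y₁ + y₂)⁺ + (y₁⁻ + y₂⁻) = (y₁ + y₂)⁻ + (y₁⁺ + y₂⁺) := by
      have h0 : (y₁ + y₂)⁺ + (y₁⁻ + y₂⁻) - ((y₁ + y₂)⁻ + (y₁⁺ + y₂⁺)) =
          ((y₁ + y₂)⁺ - (y₁ + y₂)⁻) - ((y₁⁺ - y₁⁻) + (y₂⁺ - y₂⁻)) := by abel
      rw [posPart_sub_negPart, posPart_sub_negPart, posPart_sub_negPart] at h0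
      have h1 : (y₁ + y₂)⁺ + (y₁⁻ + y₂⁻) - ((y₁ + y₂)⁻ + (y₁⁺ + y₂⁺)) = 0 := by
        rw [h0]; abel
      exact sub_eq_zero.1 h1
    have hL : |b u ((y₁ + y₂)⁺ + (y₁⁻ + y₂⁻))| =
        |b u (y₁ + y₂)⁺| + (|b u y₁⁻| + |b u y₂⁻|) := by
      rw [coneAdd2 u hu _ _ (posPart_nonneg _)
        (add_nonneg (negPart_nonneg y₁) (negPart_nonneg y₂)),
        coneAdd2 u hu _ _ (negPart_nonneg y₁) (negPart_nonneg y₂)]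
    have hR : |b u ((y₁ + y₂)⁻ + (y₁⁺ + y₂⁺))| =
        |b u (y₁ + y₂)⁻| + (|b u y₁⁺| + |b u y₂⁺|) := by
      rw [coneAdd2 u hu _ _ (negPart_nonneg _)
        (add_nonneg (posPart_nonneg y₁) (posPart_nonneg y₂)),
        coneAdd2 u hu _ _ (posPart_nonneg y₁) (posPart_nonneg y₂)]
    have heq : |b u (y₁ + y₂)⁺| + (|b u y₁⁻| + |b u y₂⁻|) =
        |b u (y₁ + y₂)⁻| + (|b u y₁⁺| + |b u y₂⁺|) := by
      rw [← hL, ← hR, hid]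
    have h2 : |b u (y₁ + y₂)⁺| - |b u (y₁ + y₂)⁻| =
        (|b u y₁⁺| + |b u y₂⁺|) - (|b u y₁⁻| + |b u y₂⁻|) := by
      rw [sub_eq_sub_iff_add_eq_add, heq, add_comm]
    rw [h2]; abel
  -- the four `mk₂` axioms
  have H1 : ∀ (x₁ x₂ : E) (y : F), β (x₁ + x₂) y = β x₁ y + β x₂ y := by
    intro x₁ x₂ y
    have e1 := ext1 y⁺ (posPart_nonneg y) x₁ x₂
    have e2 := ext1 y⁻ (negPart_nonneg y) x₁ x₂
    calc β (x₁ + x₂) y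
        = (|b (x₁ + x₂)⁺ y⁺| - |b (x₁ + x₂)⁻ y⁺|) -
            (|b (x₁ + x₂)⁺ y⁻| - |b (x₁ + x₂)⁻ y⁻|) := by simp only [hβ]; abel
      _ = ((|b x₁⁺ y⁺| - |b x₁⁻ y⁺|) + (|b x₂⁺ y⁺| - |b x₂⁻ y⁺|)) -
            ((|b x₁⁺ y⁻| - |b x₁⁻ y⁻|) + (|b x₂⁺ y⁻| - |b x₂⁻ y⁻|)) := by rw [e1, e2]
      _ = β x₁ y + β x₂ y := by simp only [hβ]; abel
  have H3 : ∀ (x : E) (y₁ y₂ : F), β x (y₁ + y₂) = β x y₁ + β x y₂ := by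
    intro x y₁ y₂
    have e1 := ext2 x⁺ (posPart_nonneg x) y₁ y₂
    have e2 := ext2 x⁻ (negPart_nonneg x) y₁ y₂
    calc β x (y₁ + y₂)
        = (|b x⁺ (y₁ + y₂)⁺| - |b x⁺ (y₁ + y₂)⁻|) -
            (|b x⁻ (y₁ + y₂)⁺| - |b x⁻ (y₁ + y₂)⁻|) := by simp only [hβ]; abel
      _ = ((|b x⁺ y₁⁺| - |b x⁺ y₁⁻|) + (|b x⁺ y₂⁺| - |b x⁺ y₂⁻|)) -
            ((|b x⁻ y₁⁺| - |b x⁻ y₁⁻|) + (|b x⁻ y₂⁺| - |b x⁻ y₂⁻|)) := by rw [e1, e2]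
      _ = β x y₁ + β x y₂ := by simp only [hβ]; abel
  have H2 : ∀ (c : ℝ) (x : E) (y : F), β (c • x) y = c • β x y := by
    intro c x y
    rcases le_or_gt 0 c with hc | hc
    · have hp : (c • x)⁺ = c • x⁺ := RieszAbsAux.smul_posPart' hc x
      have hn : (c • x)⁻ = c • x⁻ := RieszAbsAux.smul_negPart' hc x
      simp only [hβ, hp, hn, NS1 c hc]
      simp only [smul_sub, smul_add]
    · have hc' : (0 : ℝ) ≤ -c := by linarith
      have hcx : c • x = (-c) • (-x) := by rw [neg_smul, smul_neg, neg_neg]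
      have hp : (c • x)⁺ = (-c) • x⁻ := by
        rw [hcx, RieszAbsAux.smul_posPart' hc', posPart_neg]
      have hn : (c • x)⁻ = (-c) • x⁺ := by
        rw [hcx, RieszAbsAux.smul_negPart' hc', negPart_neg]
      simp only [hβ, hp, hn, NS1 (-c) hc']
      simp only [neg_smul, smul_sub, smul_add]
      abel
  have H4 : ∀ (c : ℝ) (x : E) (y : F), β x (c • y) = c • β x y := by
    intro c x y
    rcases le_or_gt 0 c with hc | hc
    · have hp : (c • y)⁺ = c • y⁺ := RieszAbsAux.smul_posPart' hc y
      have hn : (c • y)⁻ = c • y⁻ := RieszAbsAux.smul_negPart' hc y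
      simp only [hβ, hp, hn, NS2 c hc]
      simp only [smul_sub, smul_add]
    · have hc' : (0 : ℝ) ≤ -c := by linarith
      have hcy : c • y = (-c) • (-y) := by rw [neg_smul, smul_neg, neg_neg]
      have hp : (c • y)⁺ = (-c) • y⁻ := by
        rw [hcy, RieszAbsAux.smul_posPart' hc', posPart_neg]
      have hn : (c • y)⁻ = (-c) • y⁺ := by
        rw [hcy, RieszAbsAux.smul_negPart' hc', negPart_neg]
      simp only [hβ, hp, hn, NS2 (-c) hc']
      simp only [neg_smul, smul_sub, smul_add]
      abel
  -- value on the positive cone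
  have Npos : ∀ (u : E) (v : F), 0 ≤ u → 0 ≤ v → β u v = |b u v| := by
    intro u v hu hv
    simp only [hβ, posPart_eq_self.2 hu, negPart_eq_zero.2 hu, posPart_eq_self.2 hv,
      negPart_eq_zero.2 hv, map_zero, LinearMap.zero_apply, abs_zero, sub_zero, add_zero]
  -- bound on the absolute value of β
  have βabs : ∀ (x : E) (z : F), |β x z| ≤ |b (|x|) (|z|)| := by
    intro x z
    have hS := SUM4 x z
    set S := |b x⁺ z⁺| + |b x⁺ z⁻| + (|b x⁻ z⁺| + |b x⁻ z⁻|) with hSdef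
    have hu' : β x z ≤ S := by
      have h0 : S - β x z = (|b x⁺ z⁻| + |b x⁺ z⁻|) + (|b x⁻ z⁺| + |b x⁻ z⁺|) := by
        simp only [hβ, hSdef]; abel
      have h1 : 0 ≤ S - β x z := by
        rw [h0]
        exact add_nonneg (add_nonneg (abs_nonneg _) (abs_nonneg _))
          (add_nonneg (abs_nonneg _) (abs_nonneg _))
      exact sub_nonneg.1 h1
    have hl' : -(β x z) ≤ S := by
      have h0 : S + β x z = (|b x⁺ z⁺| + |b x⁺ z⁺|) + (|b x⁻ z⁻| + |b x⁻ z⁻|) := by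
        simp only [hβ, hSdef]; abel
      have h1 : 0 ≤ S + β x z := by
        rw [h0]
        exact add_nonneg (add_nonneg (abs_nonneg _) (abs_nonneg _))
          (add_nonneg (abs_nonneg _) (abs_nonneg _))
      calc -(β x z) = 0 - β x z := (zero_sub _).symm
        _ ≤ (S + β x z) - β x z := sub_le_sub_right h1 _
        _ = S := by abel
    rw [hS]
    exact abs_le'.2 ⟨hu', hl'⟩
  refine ⟨LinearMap.mk₂ ℝ β (fun x₁ x₂ y => H1 x₁ x₂ y) (fun c x y => H2 c x y)
    (fun x y₁ y₂ => H3 x y₁ y₂) (fun c x y => H4 c x y), ?_, ?_, ?_, ?_⟩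
  · intro x hx y hy
    rw [LinearMap.mk₂_apply, Npos x y hx hy]
    exact abs_nonneg _
  · intro x y hxy z
    have h1 : |(LinearMap.mk₂ ℝ β (fun x₁ x₂ y => H1 x₁ x₂ y) (fun c x y => H2 c x y)
        (fun x y₁ y₂ => H3 x y₁ y₂) (fun c x y => H4 c x y)) x z| ≤ |b x z| := by
      rw [LinearMap.mk₂_apply]
      exact (βabs x z).trans_eq (CHAIN1 x z).symm
    have h2 : |(LinearMap.mk₂ ℝ β (fun x₁ x₂ y => H1 x₁ x₂ y) (fun c x y => H2 c x y)
        (fun x y₁ y₂ => H3 x y₁ y₂) (fun c x y => H4 c x y)) y z| ≤ |b y z| := by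
      rw [LinearMap.mk₂_apply]
      exact (βabs y z).trans_eq (CHAIN1 y z).symm
    exact le_antisymm ((inf_le_inf h1 h2).trans (hb_dp₁ x y hxy z).le)
      (le_inf (abs_nonneg _) (abs_nonneg _))
  · intro u v huv t
    have h1 : |(LinearMap.mk₂ ℝ β (fun x₁ x₂ y => H1 x₁ x₂ y) (fun c x y => H2 c x y)
        (fun x y₁ y₂ => H3 x y₁ y₂) (fun c x y => H4 c x y)) t u| ≤ |b t u| := by
      rw [LinearMap.mk₂_apply]
      exact (βabs t u).trans_eq (CHAIN1 t u).symm
    have h2 : |(LinearMap.mk₂ ℝ β (fun x₁ x₂ y => H1 x₁ x₂ y) (fun c x y => H2 c x y)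
        (fun x y₁ y₂ => H3 x y₁ y₂) (fun c x y => H4 c x y)) t v| ≤ |b t v| := by
      rw [LinearMap.mk₂_apply]
      exact (βabs t v).trans_eq (CHAIN1 t v).symm
    exact le_antisymm ((inf_le_inf h1 h2).trans (hb_dp₂ u v huv t).le)
      (le_inf (abs_nonneg _) (abs_nonneg _))
  · intro x y
    have hB : (LinearMap.mk₂ ℝ β (fun x₁ x₂ y => H1 x₁ x₂ y) (fun c x y => H2 c x y)
        (fun x y₁ y₂ => H3 x y₁ y₂) (fun c x y => H4 c x y)) (|x|) (|y|) = |b (|x|) (|y|)| := by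
      rw [LinearMap.mk₂_apply]
      exact Npos (|x|) (|y|) (abs_nonneg x) (abs_nonneg y)
    refine ⟨CHAIN1 x y, ?_, ?_⟩
    · rw [hB, abs_abs]
    · rw [hB, abs_abs]
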